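/- Let λ, μ, ν be partitions with at most k parts and |ν| = |λ| + |μ|. The monomial x^ν appears with nonzero coefficient in the product of Schur polynomials s_λ(x_1,...,x_k)·s_μ(x_1,...,x_k) if and only if ν lies in the permutahedron of λ+μ, i.e., ν is dominated by λ+μ: ∑_{i=1}^t ν_i ≤ ∑_{i=1}^t (λ_i+μ_i) for all t. -/

import Mathlib

open Finset MvPolynomial
open scoped Classical

noncomputable section

def IsSSYT {k : ℕ} (f : Fin k → ℕ) (T : Fin k × ℕ → Option (Fin k)) : Prop :=
  (∀ (i : Fin k) (j : ℕ), (T (i, j)).isSome ↔ j < f i) ∧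
  (∀ (i : Fin k) (j j' : ℕ) (a b : Fin k),
      j ≤ j' → T (i, j) = some a → T (i, j') = some b → a ≤ b) ∧
  (∀ (i i' : Fin k) (j : ℕ) (a b : Fin k),
      i < i' → T (i, j) = some a → T (i', j) = some b → a < b)

def content {k : ℕ} (f : Fin k → ℕ) (T : Fin k × ℕ → Option (Fin k)) (l : Fin k) : ℕ :=
  ((univ ×ˢ range (univ.sup f)).filter fun c => T c = some l).card

def schurPoly {k : ℕ} (f : Fin k → ℕ) : MvPolynomial (Fin k) ℝ :=
  ∑ᶠ T : Fin k × ℕ → Option (Fin k),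
    if IsSSYT f T then ∏ l : Fin k, X l ^ content f T l else 0

namespace Stmt14Aux

variable {k : ℕ}

/-- Partial sums of the first `t` parts. -/
def PS (c : Fin k → ℕ) (t : ℕ) : ℕ := ∑ i ∈ univ.filter (fun i : Fin k => (i : ℕ) < t), c i

lemma PS_zero (c : Fin k → ℕ) : PS c 0 = 0 := by
  unfold PS
  rw [Finset.sum_eq_zero_iff]
  intro i hi
  simp at hi

lemma PS_succ (c : Fin k → ℕ) (i : Fin k) : PS c ((i : ℕ) + 1) = PS c (i : ℕ) + c i := by
  unfold PS
  have h : univ.filter (fun j : Fin k => (j : ℕ) < (i : ℕ) + 1)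
      = insert i (univ.filter (fun j : Fin k => (j : ℕ) < (i : ℕ))) := by
    ext j
    simp only [mem_filter, mem_univ, true_and, mem_insert, Fin.ext_iff]
    omega
  rw [h, Finset.sum_insert (by simp)]
  ring

lemma PS_all (c : Fin k → ℕ) {t : ℕ} (ht : k ≤ t) : PS c t = ∑ i, c i := by
  unfold PS
  rw [Finset.filter_true_of_mem]
  intro i _
  exact lt_of_lt_of_le i.isLt ht

lemma PS_upd {c : Fin k → ℕ} {A B : Fin k} (hAB : (A : ℕ) + 1 = (B : ℕ)) (hc : 1 ≤ c A)
    (t : ℕ) :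
    PS (fun l => if l = A then c l - 1 else if l = B then c l + 1 else c l) t
        + (if (A : ℕ) < t then 1 else 0)
      = PS c t + (if (B : ℕ) < t then 1 else 0) := by
  have hne : A ≠ B := by
    intro h; rw [h] at hAB; omega
  unfold PS
  have hA : (if (A : ℕ) < t then (1:ℕ) else 0)
      = ∑ i ∈ univ.filter (fun i : Fin k => (i : ℕ) < t), (if i = A then 1 else 0) := by
    rw [Finset.sum_ite_eq' _ A (fun _ => (1:ℕ))]
    simp
  have hB : (if (B : ℕ) < t then (1:ℕ) else 0)
      = ∑ i ∈ univ.filter (fun i : Fin k => (i : ℕ) < t), (if i = B then 1 else 0) := by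
    rw [Finset.sum_ite_eq' _ B (fun _ => (1:ℕ))]
    simp
  rw [hA, hB, ← Finset.sum_add_distrib, ← Finset.sum_add_distrib]
  apply Finset.sum_congr rfl
  intro i _
  by_cases h1 : i = A
  · subst h1
    rw [if_pos rfl, if_pos rfl, if_neg hne]
    omega
  · rw [if_neg h1, if_neg h1]
    by_cases h2 : i = B
    · subst h2; simp
    · simp [h2]


lemma ssyt_finite (f : Fin k → ℕ) :
    {T : Fin k × ℕ → Option (Fin k) | IsSSYT f T}.Finite := by
  classical
  set N := univ.sup f with hN
  apply Set.Finite.of_finite_image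
      (f := fun T : Fin k × ℕ → Option (Fin k) => fun p : Fin k × Fin N => T (p.1, (p.2 : ℕ)))
  · exact Set.toFinite _
  · intro T hT T' hT' hEq
    funext c
    obtain ⟨i, j⟩ := c
    by_cases hj : j < N
    · exact congrFun hEq ⟨i, ⟨j, hj⟩⟩
    · have h1 : T (i, j) = none := by
        rw [← Option.not_isSome_iff_eq_none, hT.1 i j]
        have : f i ≤ N := Finset.le_sup (mem_univ i)
        omega
      have h2 : T' (i, j) = none := by
        rw [← Option.not_isSome_iff_eq_none, hT'.1 i j]
        have : f i ≤ N := Finset.le_sup (mem_univ i)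
        omega
      rw [h1, h2]

lemma prod_X_pow (c : Fin k → ℕ) :
    (∏ l : Fin k, (X l : MvPolynomial (Fin k) ℝ) ^ c l)
      = monomial (Finsupp.equivFunOnFinite.symm c) 1 := by
  rw [monomial_eq, C_1, one_mul, Finsupp.prod_fintype]
  · rfl
  · intro i; exact pow_zero _

lemma schurPoly_eq (f : Fin k → ℕ) :
    schurPoly f = ∑ T ∈ (ssyt_finite f).toFinset,
      monomial (Finsupp.equivFunOnFinite.symm (content f T)) (1 : ℝ) := by
  rw [schurPoly]
  rw [finsum_eq_finset_sum_of_support_subset]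
  · apply Finset.sum_congr rfl
    intro T hT
    have hT2 : IsSSYT f T := (ssyt_finite f).mem_toFinset.mp hT
    rw [if_pos hT2, prod_X_pow]
  · intro T hT
    simp only [Function.mem_support, ne_eq] at hT
    simp only [Finset.coe_sort_coe, Set.Finite.coe_toFinset, Set.mem_setOf_eq]
    by_contra hc
    exact hT (if_neg hc)

lemma coeff_schur_mul (f g : Fin k → ℕ) (nu : Fin k → ℕ) :
    coeff (Finsupp.equivFunOnFinite.symm nu) (schurPoly f * schurPoly g) ≠ 0 ↔
      ∃ T T', IsSSYT f T ∧ IsSSYT g T' ∧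
        ∀ l, content f T l + content g T' l = nu l := by
  classical
  rw [schurPoly_eq, schurPoly_eq, Finset.sum_mul_sum]
  rw [coeff_sum]
  have hterm : ∀ T ∈ (ssyt_finite f).toFinset,
      coeff (Finsupp.equivFunOnFinite.symm nu)
        (∑ T' ∈ (ssyt_finite g).toFinset,
          monomial (Finsupp.equivFunOnFinite.symm (content f T)) (1:ℝ) *
            monomial (Finsupp.equivFunOnFinite.symm (content g T')) (1:ℝ))
      = ∑ T' ∈ (ssyt_finite g).toFinset,
          (if Finsupp.equivFunOnFinite.symm (content f T)
              + Finsupp.equivFunOnFinite.symm (content g T')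
              = Finsupp.equivFunOnFinite.symm nu then (1:ℝ) else 0) := by
    intro T _
    rw [coeff_sum]
    apply Finset.sum_congr rfl
    intro T' _
    rw [monomial_mul, coeff_monomial, mul_one]
  rw [Finset.sum_congr rfl hterm]
  constructor
  · intro h
    by_contra hc
    push_neg at hc
    apply h
    apply Finset.sum_eq_zero
    intro T hT
    apply Finset.sum_eq_zero
    intro T' hT'
    rw [if_neg]
    intro heq
    have hTs := (ssyt_finite f).mem_toFinset.mp hT
    have hTs' := (ssyt_finite g).mem_toFinset.mp hT'
    obtain ⟨l, hl⟩ := hc T T' hTs hTs'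
    apply hl
    have := DFunLike.congr_fun heq l
    simpa using this
  · rintro ⟨T, T', hT, hT', hsum⟩ h
    have hmem : T ∈ (ssyt_finite f).toFinset := (ssyt_finite f).mem_toFinset.mpr hT
    have hmem' : T' ∈ (ssyt_finite g).toFinset := (ssyt_finite g).mem_toFinset.mpr hT'
    have hpos : (0:ℝ) < ∑ T ∈ (ssyt_finite f).toFinset, ∑ T' ∈ (ssyt_finite g).toFinset,
        (if Finsupp.equivFunOnFinite.symm (content f T)
            + Finsupp.equivFunOnFinite.symm (content g T')
            = Finsupp.equivFunOnFinite.symm nu then (1:ℝ) else 0) := by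
      apply Finset.sum_pos'
      · intro a _
        apply Finset.sum_nonneg
        intro b _
        split <;> norm_num
      · refine ⟨T, hmem, ?_⟩
        apply Finset.sum_pos'
        · intro b _; split <;> norm_num
        · refine ⟨T', hmem', ?_⟩
          rw [if_pos]
          · norm_num
          · ext l
            simpa using hsum l
    rw [h] at hpos
    exact lt_irrefl _ hpos


lemma entry_isSome {f : Fin k → ℕ} {T} (hT : IsSSYT f T) {i : Fin k} {j : ℕ} {l : Fin k}
    (h : T (i, j) = some l) : j < f i := by
  rw [← hT.1 i j, h]; rfl

lemma row_le_entry {f : Fin k → ℕ} (hf : Antitone f) {T} (hT : IsSSYT f T) :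
    ∀ (n : ℕ) (i : Fin k) (j : ℕ) (l : Fin k), (i : ℕ) = n → T (i, j) = some l →
      (i : ℕ) ≤ (l : ℕ) := by
  intro n
  induction n using Nat.strong_induction_on with
  | _ n ih =>
    intro i j l hi hTij
    rcases Nat.eq_zero_or_pos n with h0 | hpos
    · omega
    · have hik : n - 1 < k := by have := i.isLt; omega
      set i' : Fin k := ⟨n - 1, hik⟩ with hi'
      have hlt : i' < i := by
        rw [Fin.lt_iff_val_lt_val]; simp [hi']; omega
      have hji' : j < f i' := by
        have h1 : j < f i := entry_isSome hT hTij
        have h2 : f i ≤ f i' := hf (le_of_lt hlt)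
        omega
      have hsome : (T (i', j)).isSome := (hT.1 i' j).mpr hji'
      obtain ⟨l', hl'⟩ := Option.isSome_iff_exists.mp hsome
      have h3 : l' < l := hT.2.2 i' i j l' l hlt hl' hTij
      have h4 : (i' : ℕ) ≤ (l' : ℕ) := ih (n-1) (by omega) i' j l' rfl hl'
      have h5 : (l' : ℕ) < (l : ℕ) := h3
      simp only [hi'] at h4
      omega

lemma content_PS_le {f : Fin k → ℕ} (hf : Antitone f) {T} (hT : IsSSYT f T) (t : ℕ) :
    PS (content f T) t ≤ PS f t := by
  classical
  set N := univ.sup f with hN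
  set Cells : Finset (Fin k × ℕ) := univ ×ˢ range N with hCells
  have e1 : PS (content f T) t
      = ((univ.filter (fun l : Fin k => (l : ℕ) < t)).biUnion
          (fun l => Cells.filter (fun c => T c = some l))).card := by
    rw [Finset.card_biUnion]
    · rfl
    · intro l _ l' _ hll'
      rw [Function.onFun, Finset.disjoint_left]
      intro c hc hc'
      simp only [mem_filter] at hc hc'
      rw [hc.2] at hc'
      exact hll' (by injection hc'.2)
  have e2 : PS f t
      = ((univ.filter (fun i : Fin k => (i : ℕ) < t)).biUnion
          (fun i => {i} ×ˢ range (f i))).card := by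
    rw [Finset.card_biUnion]
    · unfold PS
      apply Finset.sum_congr rfl
      intro i _
      simp
    · intro i _ i' _ hii'
      rw [Function.onFun, Finset.disjoint_left]
      intro c hc hc'
      simp only [Finset.mem_product, Finset.mem_singleton] at hc hc'
      exact hii' (hc.1 ▸ hc'.1 ▸ rfl)
  rw [e1, e2]
  apply Finset.card_le_card
  intro c hc
  simp only [Finset.mem_biUnion, mem_filter, mem_univ, true_and] at hc ⊢
  obtain ⟨l, hlt, hcC, hTc⟩ := hc
  obtain ⟨i, j⟩ := c
  have hji : j < f i := entry_isSome hT hTc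
  have hrow : (i : ℕ) ≤ (l : ℕ) := row_le_entry hf hT (i : ℕ) i j l rfl hTc
  refine ⟨i, by omega, ?_⟩
  simp [hji]

lemma base_tableau (f : Fin k → ℕ) :
    ∃ T, IsSSYT f T ∧ ∀ l, content f T l = f l := by
  classical
  refine ⟨fun c => if c.2 < f c.1 then some c.1 else none, ⟨?_, ?_, ?_⟩, ?_⟩
  · intro i j
    by_cases h : j < f i <;> simp [h]
  · intro i j j' a b hjj' ha hb
    simp only at ha hb
    by_cases h : j < f i
    · rw [if_pos h] at ha
      by_cases h' : j' < f i
      · rw [if_pos h'] at hb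
        injection ha with ha; injection hb with hb
        rw [← ha, ← hb]
      · rw [if_neg h'] at hb; exact absurd hb (by simp)
    · rw [if_neg h] at ha; exact absurd ha (by simp)
  · intro i i' j a b hii' ha hb
    simp only at ha hb
    by_cases h : j < f i
    · rw [if_pos h] at ha
      by_cases h' : j < f i'
      · rw [if_pos h'] at hb
        injection ha with ha; injection hb with hb
        rw [← ha, ← hb]; exact hii'
      · rw [if_neg h'] at hb; exact absurd hb (by simp)
    · rw [if_neg h] at ha; exact absurd ha (by simp)
  · intro l
    unfold content
    have : ((univ ×ˢ range (univ.sup f)).filter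
        fun c : Fin k × ℕ => (if c.2 < f c.1 then some c.1 else none) = some l)
        = {l} ×ˢ range (f l) := by
      ext ⟨i, j⟩
      simp only [mem_filter, Finset.mem_product, mem_univ, true_and, Finset.mem_range,
        Finset.mem_singleton]
      constructor
      · rintro ⟨hj, hif⟩
        by_cases h : j < f i
        · rw [if_pos h] at hif
          injection hif with hif
          exact ⟨hif, hif ▸ h⟩
        · rw [if_neg h] at hif; exact absurd hif (by simp)
      · rintro ⟨hi, hj⟩
        subst hi
        refine ⟨lt_of_lt_of_le hj (Finset.le_sup (mem_univ i)), by rw [if_pos hj]⟩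
    rw [this]
    simp


lemma huniq_aux {f : Fin k → ℕ} {T} (hT : IsSSYT f T) :
    ∀ (j : ℕ) (i₁ i₂ l : Fin k), T (i₁, j) = some l → T (i₂, j) = some l → i₁ = i₂ := by
  intro j i₁ i₂ l h1 h2
  rcases lt_trichotomy i₁ i₂ with hlt | heq | hgt
  · exact absurd (hT.2.2 i₁ i₂ j l l hlt h1 h2) (lt_irrefl l)
  · exact heq
  · exact absurd (hT.2.2 i₂ i₁ j l l hgt h2 h1) (lt_irrefl l)

lemma crystal {f : Fin k → ℕ} (hf : Antitone f) {T} (hT : IsSSYT f T) {A B : Fin k}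
    (hAB : (A : ℕ) + 1 = (B : ℕ)) (h : content f T B < content f T A) :
    ∃ T', IsSSYT f T' ∧ ∀ l, content f T' l =
      if l = A then content f T A - 1
      else if l = B then content f T B + 1 else content f T l := by
  classical
  have hABne : A ≠ B := fun hh => by rw [hh] at hAB; omega
  have hABlt : A < B := by rw [Fin.lt_iff_val_lt_val]; omega
  have cardcols : ∀ l : Fin k, content f T l
      = ((range (univ.sup f)).filter (fun j => ∃ i, T (i, j) = some l)).card := by
    intro l
    unfold content
    apply Finset.card_bij (fun c _ => c.2)
    · intro c hc
      simp only [mem_filter, Finset.mem_product, mem_univ, true_and] at hc ⊢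
      exact ⟨hc.1, ⟨c.1, hc.2⟩⟩
    · intro c hc c' hc' heq
      simp only [mem_filter, Finset.mem_product, mem_univ, true_and] at hc hc'
      have hfst : c.1 = c'.1 := by
        apply huniq_aux hT c.2 c.1 c'.1 l hc.2
        rw [heq]; exact hc'.2
      exact Prod.ext hfst heq
    · intro j hj
      simp only [mem_filter, Finset.mem_range] at hj
      obtain ⟨hjN, i, hi⟩ := hj
      refine ⟨(i, j), ?_, rfl⟩
      simp only [mem_filter, Finset.mem_product, mem_univ, true_and, Finset.mem_range]
      exact ⟨hjN, hi⟩
  set colsA : Finset ℕ :=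
    (range (univ.sup f)).filter (fun j => ∃ i, T (i, j) = some A) with hcolsA
  set colsB : Finset ℕ :=
    (range (univ.sup f)).filter (fun j => ∃ i, T (i, j) = some B) with hcolsB
  have hPne : (colsA \ colsB).Nonempty := by
    rw [Finset.sdiff_nonempty]
    intro hsub
    have hcc := Finset.card_le_card hsub
    rw [← cardcols A, ← cardcols B] at hcc
    omega
  set j0 : ℕ := (colsA \ colsB).max' hPne with hj0
  have hj0mem := Finset.max'_mem (colsA \ colsB) hPne
  rw [Finset.mem_sdiff] at hj0mem
  obtain ⟨hj0A, hj0nB⟩ := hj0mem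
  have hj0N : j0 ∈ range (univ.sup f) := (Finset.mem_filter.mp hj0A).1
  obtain ⟨i₀, hi₀⟩ : ∃ i, T (i, j0) = some A := (Finset.mem_filter.mp hj0A).2
  have hnoB : ∀ i, T (i, j0) ≠ some B := by
    intro i hTB
    exact hj0nB (Finset.mem_filter.mpr ⟨hj0N, ⟨i, hTB⟩⟩)
  have hj0fi : j0 < f i₀ := entry_isSome hT hi₀
  have hright : T (i₀, j0 + 1) ≠ some A := by
    intro hra
    have hj1f : j0 + 1 < f i₀ := entry_isSome hT hra
    have hj1N : j0 + 1 ∈ range (univ.sup f) := by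
      rw [Finset.mem_range]
      have : f i₀ ≤ univ.sup f := Finset.le_sup (mem_univ i₀)
      omega
    have hj1A : j0 + 1 ∈ colsA := Finset.mem_filter.mpr ⟨hj1N, ⟨i₀, hra⟩⟩
    have hj1B : j0 + 1 ∈ colsB := by
      by_contra hcon
      have hmem : j0 + 1 ∈ colsA \ colsB := Finset.mem_sdiff.mpr ⟨hj1A, hcon⟩
      have := Finset.le_max' _ _ hmem
      omega
    obtain ⟨i₂, hi₂⟩ : ∃ i, T (i, j0 + 1) = some B := (Finset.mem_filter.mp hj1B).2
    have hlt : i₀ < i₂ := by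
      rcases lt_trichotomy i₀ i₂ with hh | hh | hh
      · exact hh
      · exfalso; rw [hh] at hra; rw [hra] at hi₂
        exact hABne (by injection hi₂)
      · exfalso
        have := hT.2.2 i₂ i₀ (j0+1) B A hh hi₂ hra
        rw [Fin.lt_iff_val_lt_val] at this
        omega
    have hi₂val : (i₂ : ℕ) = (i₀ : ℕ) + 1 := by
      by_contra hcon
      have hlt' : (i₀ : ℕ) < (i₂ : ℕ) := hlt
      have h2 : (i₀ : ℕ) + 1 < (i₂ : ℕ) := by omega
      have hik : (i₀ : ℕ) + 1 < k := lt_trans h2 i₂.isLt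
      set i₁ : Fin k := ⟨(i₀ : ℕ) + 1, hik⟩ with hi₁def
      have hi₁lt : i₀ < i₁ := by rw [Fin.lt_iff_val_lt_val]; simp [hi₁def]
      have hi₁lt2 : i₁ < i₂ := by rw [Fin.lt_iff_val_lt_val]; simp [hi₁def]; omega
      have hsome : (T (i₁, j0 + 1)).isSome := by
        rw [hT.1]
        have h5 : j0 + 1 < f i₂ := entry_isSome hT hi₂
        have h6 : f i₂ ≤ f i₁ := hf (le_of_lt hi₁lt2)
        omega
      obtain ⟨x, hx⟩ := Option.isSome_iff_exists.mp hsome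
      have hx1 : A < x := hT.2.2 i₀ i₁ (j0+1) A x hi₁lt hra hx
      have hx2 : x < B := hT.2.2 i₁ i₂ (j0+1) x B hi₁lt2 hx hi₂
      rw [Fin.lt_iff_val_lt_val] at hx1 hx2
      omega
    have hsome : (T (i₂, j0)).isSome := by
      rw [hT.1]
      have h5 : j0 + 1 < f i₂ := entry_isSome hT hi₂
      omega
    obtain ⟨y, hy⟩ := Option.isSome_iff_exists.mp hsome
    have hy1 : A < y := hT.2.2 i₀ i₂ j0 A y hlt hi₀ hy
    have hy2 : y ≤ B := hT.2.1 i₂ j0 (j0+1) y B (by omega) hy hi₂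
    have hyB : y = B := by
      rw [Fin.lt_iff_val_lt_val] at hy1
      rw [Fin.le_iff_val_le_val] at hy2
      apply Fin.ext; omega
    exact hnoB i₂ (hyB ▸ hy)
  set T' : Fin k × ℕ → Option (Fin k) := Function.update T (i₀, j0) (some B) with hT'def
  have hTat : T' (i₀, j0) = some B := Function.update_self _ _ _
  have hTne : ∀ c, c ≠ (i₀, j0) → T' c = T c := fun c hc => Function.update_of_ne hc _ _
  have hS1 : ∀ (i : Fin k) (j : ℕ), (T' (i, j)).isSome ↔ j < f i := by
    intro i j
    by_cases hc : ((i, j) : Fin k × ℕ) = (i₀, j0)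
    · rw [Prod.mk.injEq] at hc
      obtain ⟨hi, hj⟩ := hc
      subst hi; subst hj
      rw [hTat]
      simp [hj0fi]
    · rw [hTne (i, j) hc]
      exact hT.1 i j
  have hS2 : ∀ (i : Fin k) (j j' : ℕ) (a b : Fin k),
      j ≤ j' → T' (i, j) = some a → T' (i, j') = some b → a ≤ b := by
    intro i j j' a b hjj' ha hb
    by_cases hc1 : ((i, j) : Fin k × ℕ) = (i₀, j0) <;>
      by_cases hc2 : ((i, j') : Fin k × ℕ) = (i₀, j0)
    · rw [hc1, hTat] at ha
      rw [hc2, hTat] at hb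
      injection ha with ha; injection hb with hb
      rw [← ha, ← hb]
    · rw [Prod.mk.injEq] at hc1
      obtain ⟨hi, hj⟩ := hc1
      rw [hi, hj] at ha
      rw [hi] at hb hc2
      rw [hj] at hjj'
      rw [hTat] at ha
      injection ha with ha
      rw [hTne (i₀, j') hc2] at hb
      have hjj0 : j' ≠ j0 := by
        intro hh; exact hc2 (by rw [hh])
      have hjge : j0 + 1 ≤ j' := by omega
      have hj'f : j' < f i₀ := entry_isSome hT hb
      have hsome : (T (i₀, j0 + 1)).isSome := by
        rw [hT.1]; omega
      obtain ⟨w, hw⟩ := Option.isSome_iff_exists.mp hsome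
      have hw1 : A ≤ w := hT.2.1 i₀ j0 (j0+1) A w (by omega) hi₀ hw
      have hw2 : w ≠ A := fun hh => hright (hh ▸ hw)
      have hw3 : w ≤ b := hT.2.1 i₀ (j0+1) j' w b hjge hw hb
      rw [Fin.le_iff_val_le_val] at hw1 hw3 ⊢
      have hwA : (A : ℕ) ≠ (w : ℕ) := fun hh => hw2 (Fin.ext hh.symm)
      rw [← ha]
      omega
    · rw [Prod.mk.injEq] at hc2
      obtain ⟨hi, hj⟩ := hc2
      rw [hi, hj] at hb
      rw [hi] at ha hc1
      rw [hj] at hjj'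
      rw [hTat] at hb
      injection hb with hb
      rw [hTne (i₀, j) hc1] at ha
      have ha2 : a ≤ A := hT.2.1 i₀ j j0 a A hjj' ha hi₀
      rw [Fin.le_iff_val_le_val] at ha2 ⊢
      rw [← hb]
      omega
    · rw [hTne (i, j) hc1] at ha
      rw [hTne (i, j') hc2] at hb
      exact hT.2.1 i j j' a b hjj' ha hb
  have hS3 : ∀ (i i' : Fin k) (j : ℕ) (a b : Fin k),
      i < i' → T' (i, j) = some a → T' (i', j) = some b → a < b := by
    intro i i' j a b hii' ha hb
    by_cases hc1 : ((i, j) : Fin k × ℕ) = (i₀, j0) <;>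
      by_cases hc2 : ((i', j) : Fin k × ℕ) = (i₀, j0)
    · exfalso
      rw [Prod.mk.injEq] at hc1 hc2
      rw [Fin.lt_iff_val_lt_val] at hii'
      rw [hc1.1, hc2.1] at hii'
      omega
    · rw [Prod.mk.injEq] at hc1
      obtain ⟨hi, hj⟩ := hc1
      rw [hi, hj] at ha
      rw [hj] at hb hc2
      rw [hi] at hii'
      rw [hTat] at ha
      injection ha with ha
      rw [hTne (i', j0) hc2] at hb
      have hb1 : A < b := hT.2.2 i₀ i' j0 A b hii' hi₀ hb
      have hb2 : b ≠ B := fun hh => hnoB i' (hh ▸ hb)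
      rw [Fin.lt_iff_val_lt_val] at hb1 ⊢
      have : (b : ℕ) ≠ (B : ℕ) := fun hh => hb2 (Fin.ext hh)
      rw [← ha]
      omega
    · rw [Prod.mk.injEq] at hc2
      obtain ⟨hi, hj⟩ := hc2
      rw [hi, hj] at hb
      rw [hj] at ha hc1
      rw [hi] at hii'
      rw [hTat] at hb
      injection hb with hb
      rw [hTne (i, j0) hc1] at ha
      have ha2 : a < A := hT.2.2 i i₀ j0 a A hii' ha hi₀
      rw [Fin.lt_iff_val_lt_val] at ha2 ⊢
      rw [← hb]
      omega
    · rw [hTne (i, j) hc1] at ha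
      rw [hTne (i', j) hc2] at hb
      exact hT.2.2 i i' j a b hii' ha hb
  have hcellmem : ((i₀, j0) : Fin k × ℕ) ∈ univ ×ˢ range (univ.sup f) := by
    rw [Finset.mem_product]
    exact ⟨mem_univ i₀, hj0N⟩
  refine ⟨T', ⟨hS1, hS2, hS3⟩, ?_⟩
  intro l
  by_cases hlA : l = A
  · subst hlA
    rw [if_pos rfl]
    have hset : ((univ ×ˢ range (univ.sup f)).filter fun c => T' c = some l)
        = ((univ ×ˢ range (univ.sup f)).filter fun c => T c = some l).erase (i₀, j0) := by
      ext c
      simp only [mem_filter, Finset.mem_erase]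
      constructor
      · rintro ⟨hcC, hc⟩
        have hne : c ≠ (i₀, j0) := by
          intro hceq
          rw [hceq, hTat] at hc
          injection hc with hc
          exact hABne hc.symm
        rw [hTne c hne] at hc
        exact ⟨hne, hcC, hc⟩
      · rintro ⟨hne, hcC, hc⟩
        rw [hTne c hne]
        exact ⟨hcC, hc⟩
    show ((univ ×ˢ range (univ.sup f)).filter fun c => T' c = some l).card
        = content f T l - 1
    rw [hset, Finset.card_erase_of_mem]
    · rfl
    · exact Finset.mem_filter.mpr ⟨hcellmem, hi₀⟩
  · by_cases hlB : l = B
    · subst hlB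
      rw [if_neg hlA, if_pos rfl]
      have hset : ((univ ×ˢ range (univ.sup f)).filter fun c => T' c = some l)
          = insert ((i₀, j0) : Fin k × ℕ)
              ((univ ×ˢ range (univ.sup f)).filter fun c => T c = some l) := by
        ext c
        simp only [mem_filter, Finset.mem_insert]
        constructor
        · rintro ⟨hcC, hc⟩
          by_cases hne : c = (i₀, j0)
          · exact Or.inl hne
          · rw [hTne c hne] at hc
            exact Or.inr ⟨hcC, hc⟩
        · rintro (hceq | ⟨hcC, hc⟩)
          · rw [hceq, hTat]
            exact ⟨hcellmem, rfl⟩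
          · have hne : c ≠ (i₀, j0) := by
              intro hceq
              rw [hceq, hi₀] at hc
              injection hc with hc
              exact hABne hc
            rw [hTne c hne]
            exact ⟨hcC, hc⟩
      show ((univ ×ˢ range (univ.sup f)).filter fun c => T' c = some l).card
          = content f T l + 1
      rw [hset, Finset.card_insert_of_notMem]
      · rfl
      · intro hmem
        have := (Finset.mem_filter.mp hmem).2
        rw [hi₀] at this
        injection this with this
        exact hABne this
    · rw [if_neg hlA, if_neg hlB]
      have hset : ((univ ×ˢ range (univ.sup f)).filter fun c => T' c = some l)
          = ((univ ×ˢ range (univ.sup f)).filter fun c => T c = some l) := by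
        ext c
        simp only [mem_filter]
        by_cases hne : c = (i₀, j0)
        · rw [hne, hTat, hi₀]
          constructor
          · rintro ⟨hcC, hc⟩
            exfalso; apply hlB; injection hc with hc; exact hc.symm
          · rintro ⟨hcC, hc⟩
            exfalso; apply hlA; injection hc with hc; exact hc.symm
        · rw [hTne c hne]
      show ((univ ×ˢ range (univ.sup f)).filter fun c => T' c = some l).card
          = content f T l
      rw [hset]
      rfl


lemma chain {lam mu nu : Fin k → ℕ} (hlam : Antitone lam) (hmu : Antitone mu)
    (hnu : Antitone nu) :
    ∀ (n : ℕ) (c d : Fin k → ℕ),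
      (∀ t, PS nu t ≤ PS c t + PS d t) →
      (PS c k + PS d k = PS nu k) →
      (∑ t ∈ range (k+1), (PS c t + PS d t - PS nu t) = n) →
      (∃ T, IsSSYT lam T ∧ ∀ l, content lam T l = c l) →
      (∃ T', IsSSYT mu T' ∧ ∀ l, content mu T' l = d l) →
      ∃ T T', IsSSYT lam T ∧ IsSSYT mu T' ∧
        ∀ l, content lam T l + content mu T' l = nu l := by
  intro n
  induction n using Nat.strong_induction_on with
  | _ n ih =>
    rintro c d hdom htot hmeas ⟨T, hT, hcT⟩ ⟨T', hT', hdT'⟩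
    by_cases hfin : ∀ l, c l + d l = nu l
    · exact ⟨T, T', hT, hT', fun l => by rw [hcT, hdT']; exact hfin l⟩
    · push_neg at hfin
      obtain ⟨l₀, hl₀⟩ := hfin
      -- there is a strict point
      have hstrict : ∃ t₀, t₀ ≤ k ∧ PS nu t₀ < PS c t₀ + PS d t₀ := by
        by_contra hcon
        push_neg at hcon
        apply hl₀
        have h1 : PS nu (l₀ : ℕ) = PS c (l₀ : ℕ) + PS d (l₀ : ℕ) :=
          le_antisymm (hdom _) (hcon _ (le_of_lt l₀.isLt))
        have h2 : PS nu ((l₀ : ℕ) + 1) = PS c ((l₀ : ℕ) + 1) + PS d ((l₀ : ℕ) + 1) :=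
          le_antisymm (hdom _) (hcon _ l₀.isLt)
        rw [PS_succ nu l₀, PS_succ c l₀, PS_succ d l₀] at h2
        omega
      obtain ⟨t₀, ht₀k, ht₀⟩ := hstrict
      -- rightmost argmax of the slack on range (k+1)
      obtain ⟨b, hb, hbmax⟩ := Finset.exists_max_image (range (k+1))
        (fun t => PS c t + PS d t - PS nu t) ⟨0, by simp⟩
      have hbmax' : ∀ t' ∈ range (k+1),
          PS c t' + PS d t' - PS nu t' ≤ PS c b + PS d b - PS nu b := hbmax
      set S : Finset ℕ := (range (k+1)).filter
        (fun t => PS c t + PS d t - PS nu t = PS c b + PS d b - PS nu b) with hSdef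
      have hbS : b ∈ S := by
        rw [hSdef, Finset.mem_filter]; exact ⟨hb, rfl⟩
      have hSne : S.Nonempty := ⟨b, hbS⟩
      have haS := Finset.max'_mem S hSne
      set a : ℕ := S.max' hSne with hadef
      rw [hSdef, Finset.mem_filter, Finset.mem_range] at haS
      obtain ⟨hak, haM⟩ := haS
      have hamax : ∀ t' ∈ range (k+1),
          PS c t' + PS d t' - PS nu t' ≤ PS c a + PS d a - PS nu a := by
        intro t' ht'
        rw [haM]
        exact hbmax' t' ht'
      have hga1 : 1 ≤ PS c a + PS d a - PS nu a := by
        have h1 := hamax t₀ (by rw [Finset.mem_range]; omega)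
        omega
      have ha0 : a ≠ 0 := by
        intro hh
        rw [hh, PS_zero, PS_zero, PS_zero] at hga1
        omega
      have hakk : a ≠ k := by
        intro hh
        rw [hh] at hga1
        omega
      have hax : 1 ≤ a ∧ a < k := by omega
      set A : Fin k := ⟨a - 1, by omega⟩ with hAdef
      set B : Fin k := ⟨a, by omega⟩ with hBdef
      have hAv : (A : ℕ) = a - 1 := rfl
      have hBv : (B : ℕ) = a := rfl
      have hAB : (A : ℕ) + 1 = (B : ℕ) := by omega
      have hrt : PS c (a+1) + PS d (a+1) - PS nu (a+1)
          < PS c a + PS d a - PS nu a := by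
        have h1 : a + 1 ∈ range (k+1) := by rw [Finset.mem_range]; omega
        have h2 := hamax (a+1) h1
        rcases lt_or_eq_of_le h2 with hh | hh
        · exact hh
        · exfalso
          have hmem : (a+1) ∈ S := by
            rw [hSdef, Finset.mem_filter]
            refine ⟨h1, ?_⟩
            rw [hh, haM]
          have hle := Finset.le_max' S _ hmem
          rw [← hadef] at hle
          omega
      have eAc := PS_succ c A
      have eAd := PS_succ d A
      have eAn := PS_succ nu A
      have eBc := PS_succ c B
      have eBd := PS_succ d B
      have eBn := PS_succ nu B
      have hAv1 : (A : ℕ) + 1 = a := by omega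
      rw [hAv1, hAv] at eAc eAd eAn
      rw [hBv] at eBc eBd eBn
      have hnuAB : nu B ≤ nu A := hnu (by rw [Fin.le_iff_val_le_val]; omega)
      have hmaxA : PS c (a-1) + PS d (a-1) - PS nu (a-1)
          ≤ PS c a + PS d a - PS nu a :=
        hamax (a-1) (by rw [Finset.mem_range]; omega)
      have hkey : d B < d A ∨ c B < c A := by
        have h4 := hdom (a-1)
        have h5 := hdom a
        have h6 := hdom (a+1)
        omega
      have hn1 : 1 ≤ n := by
        have hmem : a ∈ range (k+1) := by rw [Finset.mem_range]; omega
        have hsingle : PS c a + PS d a - PS nu a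
            ≤ ∑ t ∈ range (k+1), (PS c t + PS d t - PS nu t) :=
          Finset.single_le_sum (f := fun t => PS c t + PS d t - PS nu t)
            (fun t _ => Nat.zero_le _) hmem
        omega
      rcases hkey with hcase | hcase
      · -- lower d
        have hd1 : 1 ≤ d A := by omega
        have hcont : content mu T' B < content mu T' A := by
          rw [hdT', hdT']; exact hcase
        obtain ⟨T₂, hT₂, hC₂⟩ := crystal hmu hT' hAB hcont
        set d' : Fin k → ℕ :=
          fun l => if l = A then d l - 1 else if l = B then d l + 1 else d l with hd'def
        have hcd' : ∀ l, content mu T₂ l = d' l := by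
          intro l
          rw [hC₂ l]
          by_cases h1 : l = A
          · subst h1; simp [hd'def, hdT']
          · by_cases h2 : l = B
            · subst h2; simp [hd'def, h1, hdT']
            · simp [hd'def, h1, h2, hdT']
        have hup : ∀ t, PS d' t + (if (A : ℕ) < t then 1 else 0)
            = PS d t + (if (B : ℕ) < t then 1 else 0) :=
          fun t => PS_upd hAB hd1 t
        have hup1 : PS d' a + 1 = PS d a := by
          have h1 := hup a
          rw [hAv, hBv] at h1
          rw [if_pos (by omega), if_neg (by omega)] at h1
          omega
        have hup2 : ∀ t, t ≠ a → PS d' t = PS d t := by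
          intro t ht
          have h1 := hup t
          rw [hAv, hBv] at h1
          by_cases h2 : a < t
          · rw [if_pos (by omega), if_pos (by omega)] at h1
            omega
          · rw [if_neg (by omega), if_neg (by omega)] at h1
            omega
        have hdom' : ∀ t, PS nu t ≤ PS c t + PS d' t := by
          intro t
          by_cases ht : t = a
          · rw [ht]
            have h2 := hdom a
            omega
          · rw [hup2 t ht]
            exact hdom t
        have htot' : PS c k + PS d' k = PS nu k := by
          rw [hup2 k (by omega)]
          exact htot
        have hmeas' : ∑ t ∈ range (k+1), (PS c t + PS d' t - PS nu t) = n - 1 := by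
          have hmem : a ∈ range (k+1) := by rw [Finset.mem_range]; omega
          have hsplit1 : (PS c a + PS d' a - PS nu a)
              + ∑ t ∈ (range (k+1)).erase a, (PS c t + PS d' t - PS nu t)
              = ∑ t ∈ range (k+1), (PS c t + PS d' t - PS nu t) :=
            Finset.add_sum_erase _ (fun t => PS c t + PS d' t - PS nu t) hmem
          have hsplit2 : (PS c a + PS d a - PS nu a)
              + ∑ t ∈ (range (k+1)).erase a, (PS c t + PS d t - PS nu t)
              = ∑ t ∈ range (k+1), (PS c t + PS d t - PS nu t) :=
            Finset.add_sum_erase _ (fun t => PS c t + PS d t - PS nu t) hmem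
          have hcongr : ∑ t ∈ (range (k+1)).erase a, (PS c t + PS d' t - PS nu t)
              = ∑ t ∈ (range (k+1)).erase a, (PS c t + PS d t - PS nu t) := by
            apply Finset.sum_congr rfl
            intro t ht
            rw [hup2 t (Finset.ne_of_mem_erase ht)]
          have h2 := hdom a
          omega
        exact ih (n-1) (by omega) c d' hdom' htot' hmeas' ⟨T, hT, hcT⟩ ⟨T₂, hT₂, hcd'⟩
      · -- lower c
        have hc1 : 1 ≤ c A := by omega
        have hcont : content lam T B < content lam T A := by
          rw [hcT, hcT]; exact hcase
        obtain ⟨T₂, hT₂, hC₂⟩ := crystal hlam hT hAB hcont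
        set c' : Fin k → ℕ :=
          fun l => if l = A then c l - 1 else if l = B then c l + 1 else c l with hc'def
        have hcc' : ∀ l, content lam T₂ l = c' l := by
          intro l
          rw [hC₂ l]
          by_cases h1 : l = A
          · subst h1; simp [hc'def, hcT]
          · by_cases h2 : l = B
            · subst h2; simp [hc'def, h1, hcT]
            · simp [hc'def, h1, h2, hcT]
        have hup : ∀ t, PS c' t + (if (A : ℕ) < t then 1 else 0)
            = PS c t + (if (B : ℕ) < t then 1 else 0) :=
          fun t => PS_upd hAB hc1 t
        have hup1 : PS c' a + 1 = PS c a := by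
          have h1 := hup a
          rw [hAv, hBv] at h1
          rw [if_pos (by omega), if_neg (by omega)] at h1
          omega
        have hup2 : ∀ t, t ≠ a → PS c' t = PS c t := by
          intro t ht
          have h1 := hup t
          rw [hAv, hBv] at h1
          by_cases h2 : a < t
          · rw [if_pos (by omega), if_pos (by omega)] at h1
            omega
          · rw [if_neg (by omega), if_neg (by omega)] at h1
            omega
        have hdom' : ∀ t, PS nu t ≤ PS c' t + PS d t := by
          intro t
          by_cases ht : t = a
          · rw [ht]
            have h2 := hdom a
            omega
          · rw [hup2 t ht]
            exact hdom t
        have htot' : PS c' k + PS d k = PS nu k := by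
          rw [hup2 k (by omega)]
          exact htot
        have hmeas' : ∑ t ∈ range (k+1), (PS c' t + PS d t - PS nu t) = n - 1 := by
          have hmem : a ∈ range (k+1) := by rw [Finset.mem_range]; omega
          have hsplit1 : (PS c' a + PS d a - PS nu a)
              + ∑ t ∈ (range (k+1)).erase a, (PS c' t + PS d t - PS nu t)
              = ∑ t ∈ range (k+1), (PS c' t + PS d t - PS nu t) :=
            Finset.add_sum_erase _ (fun t => PS c' t + PS d t - PS nu t) hmem
          have hsplit2 : (PS c a + PS d a - PS nu a)
              + ∑ t ∈ (range (k+1)).erase a, (PS c t + PS d t - PS nu t)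
              = ∑ t ∈ range (k+1), (PS c t + PS d t - PS nu t) :=
            Finset.add_sum_erase _ (fun t => PS c t + PS d t - PS nu t) hmem
          have hcongr : ∑ t ∈ (range (k+1)).erase a, (PS c' t + PS d t - PS nu t)
              = ∑ t ∈ (range (k+1)).erase a, (PS c t + PS d t - PS nu t) := by
            apply Finset.sum_congr rfl
            intro t ht
            rw [hup2 t (Finset.ne_of_mem_erase ht)]
          have h2 := hdom a
          omega
        exact ih (n-1) (by omega) c' d hdom' htot' hmeas' ⟨T₂, hT₂, hcc'⟩ ⟨T', hT', hdT'⟩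

end Stmt14Aux

theorem stmt14 {k : ℕ} (lam mu nu : Fin k → ℕ)
    (hlam : Antitone lam) (hmu : Antitone mu) (hnu : Antitone nu)
    (hsum : ∑ i, nu i = ∑ i, lam i + ∑ i, mu i) :
    coeff (Finsupp.equivFunOnFinite.symm nu) (schurPoly lam * schurPoly mu) ≠ 0 ↔
      ∀ t : ℕ, ∑ i ∈ univ.filter (fun i : Fin k => (i : ℕ) < t), nu i
        ≤ ∑ i ∈ univ.filter (fun i : Fin k => (i : ℕ) < t), (lam i + mu i) := by
  rw [Stmt14Aux.coeff_schur_mul]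
  constructor
  · rintro ⟨T, T', hT, hT', hsumc⟩ t
    rw [Finset.sum_add_distrib]
    show Stmt14Aux.PS nu t ≤ Stmt14Aux.PS lam t + Stmt14Aux.PS mu t
    have h1 : Stmt14Aux.PS nu t
        = Stmt14Aux.PS (content lam T) t + Stmt14Aux.PS (content mu T') t := by
      unfold Stmt14Aux.PS
      rw [← Finset.sum_add_distrib]
      apply Finset.sum_congr rfl
      intro i _
      exact (hsumc i).symm
    have h2 := Stmt14Aux.content_PS_le hlam hT t
    have h3 := Stmt14Aux.content_PS_le hmu hT' t
    omega
  · intro hdom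
    have hdom' : ∀ t, Stmt14Aux.PS nu t ≤ Stmt14Aux.PS lam t + Stmt14Aux.PS mu t := by
      intro t
      have h := hdom t
      rw [Finset.sum_add_distrib] at h
      exact h
    have htot' : Stmt14Aux.PS lam k + Stmt14Aux.PS mu k = Stmt14Aux.PS nu k := by
      rw [Stmt14Aux.PS_all lam le_rfl, Stmt14Aux.PS_all mu le_rfl,
        Stmt14Aux.PS_all nu le_rfl]
      omega
    obtain ⟨T, T', hT, hT', hs⟩ := Stmt14Aux.chain hlam hmu hnu
      (∑ t ∈ range (k+1), (Stmt14Aux.PS lam t + Stmt14Aux.PS mu t - Stmt14Aux.PS nu t))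
      lam mu hdom' htot' rfl (Stmt14Aux.base_tableau lam) (Stmt14Aux.base_tableau mu)
    exact ⟨T, T', hT, hT', hs⟩

end
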